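/- arXiv:0806.1364 — 6 statements merged into one kernel-verified Lean document; each statement's English description precedes it below -/
import Mathlib

section
/- Let K be a field with a non-archimedean absolute value and let Φ : K^{N+1} → K^{N+1} be a homogeneous map of degree d ≥ 2 that has nonsingular reduction, i.e., Φ has coefficients in K° and its reduction modulo the maximal ideal is nonvanishing on nonzero vectors of the (algebraic closure of the) residue field. Then ‖Φ(x)‖ = ‖x‖^d for all x ∈ K^{N+1}. -/
open MvPolynomial

/-- The valuation ring `K° = {a : ‖a‖ ≤ 1}` of a non-archimedean field, as a subring. -/
def unitBallSubring (K : Type*) [NormedField K] [IsUltrametricDist K] : Subring K where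
  carrier := {a : K | ‖a‖ ≤ 1}
  mul_mem' := by
    intro a b ha hb
    simp only [Set.mem_setOf_eq] at *
    calc ‖a * b‖ = ‖a‖ * ‖b‖ := norm_mul a b
    _ ≤ 1 * 1 := mul_le_mul ha hb (norm_nonneg b) zero_le_one
    _ = 1 := one_mul 1
  one_mem' := by simp
  add_mem' := by
    intro a b ha hb
    simp only [Set.mem_setOf_eq] at *
    exact (IsUltrametricDist.norm_add_le_max a b).trans (max_le ha hb)
  zero_mem' := by simp
  neg_mem' := by
    intro a ha
    simpa using ha

section Aux

open MvPolynomial Finset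

variable {K : Type*} [NormedField K] [IsUltrametricDist K] {n d : ℕ}

lemma degree_sum_of_mem_support {p : MvPolynomial (Fin n) K} (hp : p.IsHomogeneous d)
    {m : Fin n →₀ ℕ} (hm : m ∈ p.support) : ∑ j ∈ m.support, m j = d := by
  have := hp (MvPolynomial.mem_support_iff.mp hm)
  rw [Pi.one_def, ← Finsupp.degree_eq_weight_one] at this
  exact this

lemma norm_eval_le_pow {p : MvPolynomial (Fin n) K} (hp : p.IsHomogeneous d)
    (hc : ∀ m, ‖p.coeff m‖ ≤ 1) (x : Fin n → K) : ‖eval x p‖ ≤ ‖x‖ ^ d := by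
  rw [eval_eq]
  apply IsUltrametricDist.norm_sum_le_of_forall_le_of_nonneg
    (pow_nonneg (norm_nonneg x) d)
  intro m hm
  rw [norm_mul]
  calc ‖p.coeff m‖ * ‖∏ j ∈ m.support, x j ^ m j‖
      ≤ 1 * ∏ j ∈ m.support, ‖x‖ ^ m j := by
        refine mul_le_mul (hc m) ?_ (norm_nonneg _) zero_le_one
        rw [norm_prod]
        refine Finset.prod_le_prod (fun j _ => by positivity) (fun j _ => ?_)
        rw [norm_pow]
        exact pow_le_pow_left₀ (norm_nonneg _) (norm_le_pi_norm x j) _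
    _ = ‖x‖ ^ d := by
        rw [one_mul, Finset.prod_pow_eq_pow_sum, degree_sum_of_mem_support hp hm]

lemma eval_smul_of_isHomogeneous {p : MvPolynomial (Fin n) K} (hp : p.IsHomogeneous d)
    (c : K) (y : Fin n → K) : eval (c • y) p = c ^ d * eval y p := by
  rw [eval_eq, eval_eq, Finset.mul_sum]
  refine Finset.sum_congr rfl fun m hm => ?_
  have hdeg := degree_sum_of_mem_support hp hm
  calc p.coeff m * ∏ j ∈ m.support, (c • y) j ^ m j
      = p.coeff m * ((∏ j ∈ m.support, c ^ m j) * ∏ j ∈ m.support, y j ^ m j) := by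
        rw [← Finset.prod_mul_distrib]
        simp [mul_pow]
    _ = c ^ d * (p.coeff m * ∏ j ∈ m.support, y j ^ m j) := by
        rw [Finset.prod_pow_eq_pow_sum, hdeg]; ring

end Aux

/-- Let `K` be a field with a non-archimedean absolute value, and let `Φ` be given by `N+1`
homogeneous forms of degree `d ≥ 2` with coefficients in the valuation ring `K°`.  Suppose `Φ`
has nonsingular reduction: for any algebraically closed field `kbar` receiving the residue field
of `K` (i.e. a ring hom `ρ : K° → kbar` whose kernel is the maximal ideal `{a : ‖a‖ < 1}`), the
reduced map `Φ~` is nonvanishing at every nonzero vector of `kbar^{N+1}`.  Then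
`‖Φ(x)‖ = ‖x‖^d` for all `x ∈ K^{N+1}`. -/
theorem stmt_2 {K : Type*} [NormedField K] [IsUltrametricDist K] {N d : ℕ} (hd : 2 ≤ d)
    (Φ : Fin (N + 1) → MvPolynomial (Fin (N + 1)) K)
    (hhom : ∀ i, (Φ i).IsHomogeneous d)
    (hcoeff : ∀ i m, (Φ i).coeff m ∈ unitBallSubring K)
    (kbar : Type*) [Field kbar] [IsAlgClosed kbar]
    (ρ : unitBallSubring K →+* kbar)
    (hker : ∀ a : unitBallSubring K, ρ a = 0 ↔ ‖(a : K)‖ < 1)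
    (hns : ∀ y : Fin (N + 1) → kbar, y ≠ 0 → ∃ i,
      (∑ m ∈ (Φ i).support, ρ ⟨(Φ i).coeff m, hcoeff i m⟩ * (m.prod fun j e => y j ^ e)) ≠ 0)
    (x : Fin (N + 1) → K) :
    ‖(fun i => eval x (Φ i))‖ = ‖x‖ ^ d := by
  -- upper bound for every coordinate
  have hub : ∀ (z : Fin (N + 1) → K) (i : Fin (N + 1)), ‖eval z (Φ i)‖ ≤ ‖z‖ ^ d :=
    fun z i => norm_eval_le_pow (hhom i) (fun m => hcoeff i m) z
  by_cases hx : x = 0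
  · subst hx
    have h0 : ‖(0 : Fin (N + 1) → K)‖ = 0 := norm_zero
    have hle : ‖(fun i => eval (0 : Fin (N + 1) → K) (Φ i))‖ ≤ 0 := by
      rw [pi_norm_le_iff_of_nonneg le_rfl]
      intro i
      have := hub 0 i
      rwa [h0, zero_pow (by omega)] at this
    rw [h0, zero_pow (by omega)]
    exact le_antisymm hle (norm_nonneg _)
  · -- pick a coordinate realizing the sup norm
    obtain ⟨j, -, hj⟩ := Finset.exists_mem_eq_sup Finset.univ Finset.univ_nonempty
      (fun i => ‖x i‖₊)
    have hxj : ‖x j‖ = ‖x‖ := by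
      rw [Pi.norm_def, hj]
      exact (coe_nnnorm _).symm
    have hxpos : 0 < ‖x‖ := norm_pos_iff.mpr hx
    set c : K := x j with hc
    have hc0 : c ≠ 0 := by
      intro h
      rw [h, norm_zero] at hxj
      exact hxpos.ne' hxj.symm
    set y : Fin (N + 1) → K := c⁻¹ • x with hy
    have hxy : x = c • y := by
      rw [hy, smul_inv_smul₀ hc0]
    have hy1 : ∀ i, ‖y i‖ ≤ 1 := by
      intro i
      rw [hy]
      simp only [Pi.smul_apply, smul_eq_mul, norm_mul, norm_inv]
      rw [hxj, inv_mul_le_iff₀ hxpos, mul_one]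
      exact norm_le_pi_norm x i
    have hyj : ‖y j‖ = 1 := by
      rw [hy]
      simp only [Pi.smul_apply, smul_eq_mul, norm_mul, norm_inv, ← hc]
      rw [inv_mul_cancel₀ (by simpa using hc0)]
    have hynorm : ‖y‖ ≤ 1 := (pi_norm_le_iff_of_nonneg zero_le_one).mpr hy1
    -- the key claim: some coordinate of Φ(y) has norm 1
    have hkey : ∃ i, 1 ≤ ‖eval y (Φ i)‖ := by
      by_contra h
      push_neg at h
      set yt : Fin (N + 1) → unitBallSubring K := fun i => ⟨y i, hy1 i⟩ with hyt
      set Y : Fin (N + 1) → kbar := fun i => ρ (yt i) with hY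
      have hYne : Y ≠ 0 := by
        intro h0
        have : ρ (yt j) = 0 := congrFun h0 j
        rw [hker] at this
        simp only [hyt] at this
        rw [hyj] at this
        exact lt_irrefl 1 this
      obtain ⟨i, hi⟩ := hns Y hYne
      apply hi
      set S : unitBallSubring K :=
        ∑ m ∈ (Φ i).support, ⟨(Φ i).coeff m, hcoeff i m⟩ *
          (m.prod fun j e => yt j ^ e) with hS
      have hScoe : (S : K) = eval y (Φ i) := by
        rw [hS, eval_eq]
        push_cast
        refine Finset.sum_congr rfl fun m hm => ?_
        congr 1
        rw [Finsupp.prod]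
        push_cast
        rfl
      have h1 : (∑ m ∈ (Φ i).support, ρ ⟨(Φ i).coeff m, hcoeff i m⟩ *
          (m.prod fun j e => Y j ^ e)) = ρ S := by
        rw [hS, map_sum]
        refine Finset.sum_congr rfl fun m hm => ?_
        rw [map_mul, map_finsuppProd]
        simp [hY]
      rw [h1, hker]
      rw [hScoe]
      exact h i
    obtain ⟨i, hi⟩ := hkey
    have hgi : ‖eval y (Φ i)‖ = 1 := le_antisymm ((hub y i).trans (pow_le_one₀ (norm_nonneg y) hynorm)) hi
    have hgnorm : ‖(fun i => eval y (Φ i))‖ = 1 := by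
      refine le_antisymm ?_ ?_
      · rw [pi_norm_le_iff_of_nonneg zero_le_one]
        intro k
        exact (hub y k).trans (pow_le_one₀ (norm_nonneg y) hynorm)
      · calc (1 : ℝ) = ‖eval y (Φ i)‖ := hgi.symm
          _ ≤ ‖(fun i => eval y (Φ i))‖ := norm_le_pi_norm (fun k => eval y (Φ k)) i
    have heq : (fun i => eval x (Φ i)) = (c ^ d) • (fun i => eval y (Φ i)) := by
      funext k
      simp only [Pi.smul_apply, smul_eq_mul]
      rw [hxy, eval_smul_of_isHomogeneous (hhom k)]
    rw [heq, norm_smul, hgnorm, mul_one, norm_pow, hc, hxj]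
end

section
/- Let Φ : K^{N+1} → K^{N+1} be a nonsingular homogeneous map of degree d ≥ 2 over a non-archimedean field K. Then the homogeneous filled Julia set F_Φ = {x ∈ K^{N+1} : sup_{ℓ≥1} ‖Φ^ℓ(x)‖ < ∞} equals the sublevel set {x ∈ K^{N+1} : Ĥ_Φ(x) ≤ 0}, where Ĥ_Φ(x) = lim_ℓ d^{-ℓ} log ‖Φ^ℓ(x)‖ (with Ĥ_Φ(0) = -∞). -/
open Filter

/-- Let `Φ : K^{N+1} → K^{N+1}` be a nonsingular homogeneous map of degree `d ≥ 2` over a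
non-archimedean field `K` (with bounds `C₁‖x‖^d ≤ ‖Φ(x)‖ ≤ C₂‖x‖^d` guaranteeing the
homogeneous local height `Ĥ_Φ(x) = lim_ℓ d^{-ℓ} log ‖Φ^ℓ(x)‖` exists for nonzero `x`).
Then the homogeneous filled Julia set `F_Φ = {x : sup_{ℓ≥1} ‖Φ^ℓ(x)‖ < ∞}` equals the
sublevel set `{x : Ĥ_Φ(x) ≤ 0}` (where `Ĥ_Φ(0) = -∞`, i.e. `0` belongs to both sets). -/
theorem stmt_6 {K : Type*} [NormedField K] [IsUltrametricDist K] {N d : ℕ} (hd : 2 ≤ d)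
    (Φ : (Fin (N + 1) → K) → (Fin (N + 1) → K))
    (hhom : ∀ (a : K) (x), Φ (a • x) = a ^ d • Φ x)
    (hns : ∀ x, x ≠ 0 → Φ x ≠ 0)
    (C₁ C₂ : ℝ) (hC₁ : 0 < C₁) (hC₂ : 0 < C₂)
    (hlow : ∀ x, C₁ * ‖x‖ ^ d ≤ ‖Φ x‖)
    (hup : ∀ x, ‖Φ x‖ ≤ C₂ * ‖x‖ ^ d)
    (H : (Fin (N + 1) → K) → ℝ)
    (hH : ∀ x, x ≠ 0 →
      Tendsto (fun ℓ : ℕ => (1 / (d : ℝ) ^ ℓ) * Real.log ‖Φ^[ℓ] x‖) atTop (nhds (H x))) :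
    {x : Fin (N + 1) → K | ∃ B : ℝ, ∀ ℓ : ℕ, 1 ≤ ℓ → ‖Φ^[ℓ] x‖ ≤ B}
      = {x : Fin (N + 1) → K | x = 0 ∨ H x ≤ 0} := by
  have hD : (1:ℝ) < (d:ℝ) := by
    have : (2:ℝ) ≤ (d:ℝ) := by exact_mod_cast hd
    linarith
  have hD0 : (0:ℝ) < (d:ℝ) := by linarith
  have hΦ0 : Φ 0 = 0 := by
    have h := hhom 0 0
    simpa [zero_pow (by omega : d ≠ 0)] using h
  have hiter0 : ∀ ℓ : ℕ, Φ^[ℓ] (0 : Fin (N+1) → K) = 0 := fun ℓ =>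
    Function.iterate_fixed hΦ0 ℓ
  have hiterne : ∀ x : Fin (N+1) → K, x ≠ 0 → ∀ ℓ, Φ^[ℓ] x ≠ 0 := by
    intro x hx ℓ
    induction ℓ with
    | zero => simpa
    | succ n ih => rw [Function.iterate_succ_apply']; exact hns _ ih
  have hpow0 : Tendsto (fun ℓ : ℕ => (1/(d:ℝ))^ℓ) atTop (nhds 0) :=
    tendsto_pow_atTop_nhds_zero_of_lt_one (by positivity)
      (by rw [div_lt_one hD0]; exact hD)
  ext x
  simp only [Set.mem_setOf_eq]
  constructor
  · rintro ⟨B, hB⟩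
    by_cases hx : x = 0
    · exact Or.inl hx
    refine Or.inr ?_
    have hpos : ∀ ℓ, (0:ℝ) < ‖Φ^[ℓ] x‖ := fun ℓ => norm_pos_iff.mpr (hiterne x hx ℓ)
    have hg : Tendsto (fun ℓ : ℕ => (1/(d:ℝ)^ℓ) * Real.log (max B 1)) atTop (nhds 0) := by
      have := hpow0.mul_const (Real.log (max B 1))
      simpa [one_div, inv_pow] using this
    refine le_of_tendsto_of_tendsto (hH x hx) hg ?_
    filter_upwards [eventually_ge_atTop 1] with ℓ hℓ
    have h1 : ‖Φ^[ℓ] x‖ ≤ max B 1 := le_trans (hB ℓ hℓ) (le_max_left _ _)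
    have h2 : Real.log ‖Φ^[ℓ] x‖ ≤ Real.log (max B 1) :=
      Real.log_le_log (hpos ℓ) h1
    exact mul_le_mul_of_nonneg_left h2 (by positivity)
  · rintro (rfl | hH0)
    · exact ⟨0, fun ℓ _ => by rw [hiter0]; simp⟩
    by_cases hx : x = 0
    · exact ⟨0, fun ℓ _ => by rw [hx, hiter0]; simp⟩
    have hpos : ∀ ℓ, (0:ℝ) < ‖Φ^[ℓ] x‖ := fun ℓ => norm_pos_iff.mpr (hiterne x hx ℓ)
    set D : ℝ := (d:ℝ) with hDdef
    set c₁ : ℝ := Real.log C₁ with hc₁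
    set a : ℕ → ℝ := fun k => (1/D^k) * Real.log ‖Φ^[k] x‖ with ha
    set b : ℕ → ℝ := fun k => a k + c₁/(D-1) * (1/D)^k with hb
    have hDne : D ≠ 0 := ne_of_gt hD0
    have hD1ne : D - 1 ≠ 0 := by intro h; rw [sub_eq_zero] at h; exact absurd h.symm (ne_of_lt hD)
    have step : ∀ k, a k + c₁ * (1/D^(k+1)) ≤ a (k+1) := by
      intro k
      have hLpos := hpos k
      have hL : c₁ + (d:ℝ) * Real.log ‖Φ^[k] x‖ ≤ Real.log ‖Φ^[k+1] x‖ := by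
        rw [Function.iterate_succ_apply']
        have h1 : Real.log (C₁ * ‖Φ^[k] x‖ ^ d) ≤ Real.log ‖Φ (Φ^[k] x)‖ :=
          Real.log_le_log (by positivity) (hlow _)
        rw [Real.log_mul (ne_of_gt hC₁) (by positivity), Real.log_pow] at h1
        exact h1
      have h2 : a (k+1) = (1/D^(k+1)) * Real.log ‖Φ^[k+1] x‖ := rfl
      have h3 : (1/D^(k+1)) * (c₁ + D * Real.log ‖Φ^[k] x‖)
          = c₁ * (1/D^(k+1)) + a k := by
        simp only [ha]
        field_simp
        ring
      have h4 : (1/D^(k+1)) * (c₁ + D * Real.log ‖Φ^[k] x‖)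
          ≤ (1/D^(k+1)) * Real.log ‖Φ^[k+1] x‖ :=
        mul_le_mul_of_nonneg_left hL (by positivity)
      rw [h3] at h4
      rw [h2]
      linarith
    have hmono : Monotone b := by
      apply monotone_nat_of_le_succ
      intro k
      have key : c₁/(D-1) * (1/D)^(k+1) + c₁ * (1/D^(k+1)) = c₁/(D-1) * (1/D)^k := by
        field_simp
        have e : D * D⁻¹ = 1 := mul_inv_cancel₀ hDne
        have e2 : D^k * D⁻¹^k = 1 := by rw [← mul_pow, e, one_pow]
        linear_combination (c₁*D*D⁻¹ - c₁*D) * e2 + c₁ * e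
      have := step k
      simp only [hb]
      linarith
    have htend : Tendsto b atTop (nhds (H x)) := by
      have h0 : Tendsto (fun k : ℕ => c₁/(D-1) * (1/D)^k) atTop (nhds 0) := by
        simpa using hpow0.const_mul (c₁/(D-1))
      have := (hH x hx).add h0
      simpa [hb, ha, one_div, inv_pow] using this
    have hble : ∀ k, b k ≤ H x := fun k => hmono.ge_of_tendsto htend k
    refine ⟨Real.exp (-c₁/(D-1)), fun ℓ _ => ?_⟩
    have h1 : a ℓ ≤ -(c₁/(D-1) * (1/D)^ℓ) := by
      have := hble ℓ
      simp only [hb] at this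
      linarith
    have h2 : Real.log ‖Φ^[ℓ] x‖ ≤ -c₁/(D-1) := by
      have h3 : Real.log ‖Φ^[ℓ] x‖ = D^ℓ * a ℓ := by
        simp only [ha]
        field_simp
      have h4 : D^ℓ * a ℓ ≤ D^ℓ * (-(c₁/(D-1) * (1/D)^ℓ)) :=
        mul_le_mul_of_nonneg_left h1 (by positivity)
      have h5 : D^ℓ * (-(c₁/(D-1) * (1/D)^ℓ)) = -c₁/(D-1) := by
        rw [one_div, inv_pow]
        field_simp
      rw [h3]
      rw [h5] at h4
      exact h4
    calc ‖Φ^[ℓ] x‖ = Real.exp (Real.log ‖Φ^[ℓ] x‖) := (Real.exp_log (hpos ℓ)).symm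
      _ ≤ Real.exp (-c₁/(D-1)) := Real.exp_le_exp.mpr h2
end

section
/- Let K be an algebraically closed field with a nontrivial non-archimedean absolute value, and let Φ : K^{N+1} → K^{N+1} be a homogeneous polynomial map of degree d ≥ 2 with coefficients in K° satisfying ‖Φ(x)‖ ≥ C_1‖x‖^d for some C_1 > 0 and all x. If the filled Julia set F_Φ equals the closed unit ball B(0,1), then ‖Φ(x)‖ = ‖x‖^d for all x ∈ K^{N+1}. -/
open MvPolynomial

private lemma eval_norm_le {K : Type*} [NontriviallyNormedField K] [IsUltrametricDist K]
    {n d : ℕ} {p : MvPolynomial (Fin n) K} (hp : p.IsHomogeneous d)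
    (hc : ∀ m, ‖p.coeff m‖ ≤ 1) (x : Fin n → K) :
    ‖eval x p‖ ≤ ‖x‖ ^ d := by
  rw [eval_eq']
  refine IsUltrametricDist.norm_sum_le_of_forall_le_of_nonneg
    (pow_nonneg (norm_nonneg x) d) (fun m hm => ?_)
  rw [norm_mul]
  have hdeg : ∑ i, m i = d := by
    have := hp (MvPolynomial.mem_support_iff.mp hm)
    rw [Finsupp.weight_apply, Finsupp.sum_fintype] at this
    · simpa using this
    · simp
  calc ‖p.coeff m‖ * ‖∏ i, x i ^ m i‖
      ≤ 1 * ∏ i, ‖x‖ ^ m i := by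
        refine mul_le_mul (hc m) ?_ (norm_nonneg _) zero_le_one
        rw [norm_prod]
        refine Finset.prod_le_prod (fun i _ => norm_nonneg _) (fun i _ => ?_)
        rw [norm_pow]
        exact pow_le_pow_left₀ (norm_nonneg _) (norm_le_pi_norm x i) _
    _ = ‖x‖ ^ d := by rw [one_mul, Finset.prod_pow_eq_pow_sum, hdeg]

private lemma eval_smul_homog {K : Type*} [Field K]
    {n d : ℕ} {p : MvPolynomial (Fin n) K} (hp : p.IsHomogeneous d)
    (c : K) (x : Fin n → K) :
    eval (c • x) p = c ^ d * eval x p := by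
  rw [eval_eq', eval_eq', Finset.mul_sum]
  refine Finset.sum_congr rfl (fun m hm => ?_)
  have hdeg : ∑ i, m i = d := by
    have := hp (MvPolynomial.mem_support_iff.mp hm)
    rw [Finsupp.weight_apply, Finsupp.sum_fintype] at this
    · simpa using this
    · simp
  have : ∏ i, (c • x) i ^ m i = c ^ d * ∏ i, x i ^ m i := by
    simp only [Pi.smul_apply, smul_eq_mul, mul_pow]
    rw [Finset.prod_mul_distrib, Finset.prod_pow_eq_pow_sum, hdeg]
  rw [this]; ring

/-- Let `K` be an algebraically closed field with a nontrivial non-archimedean absolute value,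
and let `Φ : K^{N+1} → K^{N+1}` be given by `N+1` homogeneous forms of degree `d ≥ 2` with
coefficients in the valuation ring `K°` (all coefficient norms `≤ 1`), satisfying
`‖Φ(x)‖ ≥ C₁‖x‖^d` for some `C₁ > 0`.  If the homogeneous filled Julia set `F_Φ` equals the
closed unit ball `B(0,1)`, then `‖Φ(x)‖ = ‖x‖^d` for all `x`. -/
theorem stmt_9 {K : Type*} [NontriviallyNormedField K] [IsUltrametricDist K] [IsAlgClosed K]
    {N d : ℕ} (hd : 2 ≤ d)
    (Φ : Fin (N + 1) → MvPolynomial (Fin (N + 1)) K)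
    (F : (Fin (N + 1) → K) → (Fin (N + 1) → K))
    (hF : ∀ x i, F x i = eval x (Φ i))
    (hhom : ∀ i, (Φ i).IsHomogeneous d)
    (hcoeff : ∀ i m, ‖(Φ i).coeff m‖ ≤ 1)
    (C₁ : ℝ) (hC₁ : 0 < C₁)
    (hlow : ∀ x, C₁ * ‖x‖ ^ d ≤ ‖F x‖)
    (hJulia : {x : Fin (N + 1) → K | ∃ B : ℝ, ∀ ℓ : ℕ, 1 ≤ ℓ → ‖F^[ℓ] x‖ ≤ B}
      = {x : Fin (N + 1) → K | ‖x‖ ≤ 1}) :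
    ∀ x, ‖F x‖ = ‖x‖ ^ d := by
  have hub : ∀ z, ‖F z‖ ≤ ‖z‖ ^ d := by
    intro z
    rw [pi_norm_le_iff_of_nonneg (pow_nonneg (norm_nonneg z) d)]
    intro i
    rw [hF]
    exact eval_norm_le (hhom i) (hcoeff i) z
  intro x
  refine le_antisymm (hub x) ?_
  by_contra h
  push_neg at h
  have hx0 : x ≠ 0 := by
    intro hx
    subst hx
    simp only [norm_zero] at h
    have : (0:ℝ) ^ d = 0 := zero_pow (by omega)
    rw [this] at h
    exact absurd h (not_lt.mpr (norm_nonneg _))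
  have hxpos : 0 < ‖x‖ := norm_pos_iff.mpr hx0
  -- find a with ‖x‖⁻¹ ^ d < ‖a‖ and ‖a‖ * ‖F x‖ ≤ 1
  obtain ⟨a, ha1, ha2⟩ : ∃ a : K, ‖x‖⁻¹ ^ d < ‖a‖ ∧ ‖a‖ * ‖F x‖ ≤ 1 := by
    by_cases hFx : F x = 0
    · obtain ⟨a, ha⟩ := NormedField.exists_lt_norm K (‖x‖⁻¹ ^ d)
      exact ⟨a, ha, by simp [hFx]⟩
    · have hFxpos : 0 < ‖F x‖ := norm_pos_iff.mpr hFx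
      -- pick coordinate achieving the sup norm
      obtain ⟨i, -, hi⟩ := Finset.exists_mem_eq_sup (Finset.univ : Finset (Fin (N+1)))
        Finset.univ_nonempty (fun i => ‖F x i‖₊)
      have hnorm : ‖F x‖ = ‖F x i‖ := by
        rw [Pi.norm_def, hi]; rfl
      have hFxi : F x i ≠ 0 := by
        intro h0
        rw [hnorm, h0, norm_zero] at hFxpos
        exact lt_irrefl _ hFxpos
      refine ⟨(F x i)⁻¹, ?_, ?_⟩
      · rw [norm_inv, ← hnorm, inv_pow, inv_lt_inv₀ (pow_pos hxpos d) hFxpos]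
        exact h
      · rw [norm_inv, ← hnorm, inv_mul_cancel₀ (ne_of_gt hFxpos)]
  obtain ⟨c, hc⟩ := IsAlgClosed.exists_pow_nat_eq a (n := d) (by omega)
  set y : Fin (N + 1) → K := c • x with hy
  have hcd : ‖c‖ ^ d = ‖a‖ := by rw [← norm_pow, hc]
  have hcx : ‖x‖⁻¹ < ‖c‖ := by
    by_contra hcc
    push_neg at hcc
    have : ‖c‖ ^ d ≤ ‖x‖⁻¹ ^ d := pow_le_pow_left₀ (norm_nonneg c) hcc d
    rw [hcd] at this
    exact absurd ha1 (not_lt.mpr this)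
  have hynorm : 1 < ‖y‖ := by
    rw [hy, norm_smul]
    calc (1:ℝ) = ‖x‖⁻¹ * ‖x‖ := (inv_mul_cancel₀ (ne_of_gt hxpos)).symm
      _ < ‖c‖ * ‖x‖ := by exact mul_lt_mul_of_pos_right hcx hxpos
  have hFy : ‖F y‖ ≤ 1 := by
    have : F y = c ^ d • F x := by
      funext i
      rw [hF, Pi.smul_apply, smul_eq_mul, hy, eval_smul_homog (hhom i), hF]
    rw [this, norm_smul, norm_pow, hcd]
    exact ha2
  -- orbit of y is bounded by 1
  have horbit : ∀ n : ℕ, ‖F^[n] (F y)‖ ≤ 1 := by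
    intro n
    induction n with
    | zero => simpa using hFy
    | succ n ih =>
      rw [Function.iterate_succ_apply']
      calc ‖F (F^[n] (F y))‖ ≤ ‖F^[n] (F y)‖ ^ d := hub _
        _ ≤ 1 := pow_le_one₀ (norm_nonneg _) ih
  have hmem : y ∈ {x : Fin (N + 1) → K | ∃ B : ℝ, ∀ ℓ : ℕ, 1 ≤ ℓ → ‖F^[ℓ] x‖ ≤ B} := by
    refine ⟨1, fun ℓ hℓ => ?_⟩
    obtain ⟨n, rfl⟩ := Nat.exists_eq_add_of_le hℓ
    have h1n : 1 + n = n + 1 := by omega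
    rw [h1n, Function.iterate_add_apply]
    simpa using horbit n
  rw [hJulia] at hmem
  exact absurd hynorm (not_lt.mpr hmem)
end

section
/- Let K be a field with a non-archimedean absolute value and E an infinite bounded subset of K^{N+1}. For M ≥ N+1, define d_M(E) = sup over M-element subsets S of E of |Δ(S)|^{1/C(M,N+1)}, where Δ(S) is the product over all (N+1)-element subsets S_j of S of the determinant of the matrix with columns the elements of S_j, and C(M,N+1) is the binomial coefficient. Then the sequence M ↦ d_M(E) is monotone decreasing, so the limit d_∞(E) = lim_{M→∞} d_M(E) exists. -/
open scoped Classical in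
/-- `Δ(s)` for a tuple `s` of `M` vectors in `K^{N+1}`: the product, over all
`(N+1)`-element subsets of the tuple (enumerated by strictly monotone index maps),
of the absolute value of the determinant of the matrix whose columns are these vectors.
(Taking absolute values makes the sign ambiguity irrelevant.) -/
noncomputable def absVandermonde {K : Type*} [NormedField K] {N M : ℕ}
    (s : Fin M → (Fin (N + 1) → K)) : ℝ :=
  ∏ t ∈ Finset.univ.filter (fun t : Fin (N + 1) → Fin M => StrictMono t),
    ‖(Matrix.of fun i j => s (t j) i).det‖

/-- The `M`-diameter `d_M(E)` of a set `E ⊆ K^{N+1}`: the supremum of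
`|Δ(S)|^(1/binom(M,N+1))` over all `M`-element subsets `S` of `E` (given by injective
`M`-tuples of elements of `E`); the exponent is the real number `(M.choose (N+1))⁻¹`. -/
noncomputable def mDiameter {K : Type*} [NormedField K] {N : ℕ}
    (E : Set (Fin (N + 1) → K)) (M : ℕ) : ℝ :=
  sSup {r : ℝ | ∃ s : Fin M → (Fin (N + 1) → K),
    Function.Injective s ∧ (∀ i, s i ∈ E) ∧
      r = absVandermonde s ^ ((M.choose (N + 1) : ℝ)⁻¹)}

open Finset in
open scoped Classical in
/-- The number of strictly monotone maps `Fin k → Fin n` is `n.choose k`. -/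
lemma aux_card_strictMono (k n : ℕ) :
    (Finset.univ.filter (fun t : Fin k → Fin n => StrictMono t)).card = n.choose k := by
  have : (Finset.univ.filter (fun t : Fin k → Fin n => StrictMono t)).card
      = (Finset.powersetCard k (Finset.univ : Finset (Fin n))).card := by
    refine Finset.card_bij (fun t _ => Finset.image t Finset.univ) ?_ ?_ ?_
    · intro t ht
      rw [Finset.mem_filter] at ht
      rw [Finset.mem_powersetCard]
      exact ⟨Finset.subset_univ _,
        by rw [Finset.card_image_of_injective _ ht.2.injective, Finset.card_univ,
          Fintype.card_fin]⟩
    · intro t ht t' ht' h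
      rw [Finset.mem_filter] at ht ht'
      have hre : Set.range t = Set.range t' := by
        have h2 := congrArg (fun s : Finset (Fin n) => (s : Set (Fin n))) h
        simpa [Finset.coe_image, Finset.coe_univ, Set.image_univ] using h2
      have inst : WellFoundedLT (Fin k) := inferInstance
      exact (@StrictMono.range_inj (Fin k) (Fin n) _ _ inst t t' ht.2 ht'.2).1 hre
    · intro T hT
      rw [Finset.mem_powersetCard] at hT
      refine ⟨T.orderEmbOfFin hT.2, ?_, ?_⟩
      · rw [Finset.mem_filter]
        exact ⟨Finset.mem_univ _, (T.orderEmbOfFin hT.2).strictMono⟩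
      · apply Finset.coe_injective
        rw [Finset.coe_image, Finset.coe_univ, Set.image_univ,
          Finset.range_orderEmbOfFin]
  rw [this, Finset.card_powersetCard, Finset.card_univ, Fintype.card_fin]

open Finset in
open scoped Classical in
lemma aux_exists_pre {M N : ℕ} (m : Fin (M + 1)) (u : Fin (N + 1) → Fin (M + 1))
    (hu : StrictMono u) (hm : ∀ j, u j ≠ m) :
    ∃ t : Fin (N + 1) → Fin M, StrictMono t ∧ m.succAbove ∘ t = u := by
  have hrange : ∀ j, ∃ x : Fin M, m.succAbove x = u j := by
    intro j
    have : u j ∈ Set.range m.succAbove := by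
      rw [Fin.range_succAbove]
      exact hm j
    exact this
  choose t ht using hrange
  refine ⟨t, ?_, funext ht⟩
  intro i j hij
  have h2 : m.succAbove (t i) < m.succAbove (t j) := by
    rw [ht i, ht j]; exact hu hij
  exact (Fin.strictMono_succAbove m).lt_iff_lt.mp h2

open Finset in
open scoped Classical in
/-- The key combinatorial identity at the level of index maps. -/
lemma aux_key_prod {M N : ℕ} (hM : N + 1 ≤ M) (f : (Fin (N + 1) → Fin (M + 1)) → ℝ) :
    ∏ m : Fin (M + 1), ∏ t ∈ Finset.univ.filter
        (fun t : Fin (N + 1) → Fin M => StrictMono t), f (m.succAbove ∘ t)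
      = ∏ u ∈ Finset.univ.filter
          (fun u : Fin (N + 1) → Fin (M + 1) => StrictMono u), f u ^ (M - N) := by
  set A := Finset.univ.filter (fun t : Fin (N + 1) → Fin M => StrictMono t) with hA
  set B := Finset.univ.filter (fun u : Fin (N + 1) → Fin (M + 1) => StrictMono u) with hB
  set g : Fin (M + 1) × (Fin (N + 1) → Fin M) → (Fin (N + 1) → Fin (M + 1)) :=
    fun p => p.1.succAbove ∘ p.2 with hg
  have h1 : ∏ m : Fin (M + 1), ∏ t ∈ A, f (m.succAbove ∘ t)
      = ∏ p ∈ (Finset.univ : Finset (Fin (M + 1))) ×ˢ A, f (g p) := by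
    rw [Finset.prod_product]
  have himg : ((Finset.univ : Finset (Fin (M + 1))) ×ˢ A).image g = B := by
    ext u
    constructor
    · intro huimg
      obtain ⟨⟨m, t⟩, hpt, rfl⟩ := Finset.mem_image.mp huimg
      have ht : StrictMono t :=
        (Finset.mem_filter.mp (Finset.mem_product.mp hpt).2).2
      exact Finset.mem_filter.mpr
        ⟨Finset.mem_univ _, (Fin.strictMono_succAbove m).comp ht⟩
    · intro huB
      have hu : StrictMono u := (Finset.mem_filter.mp huB).2
      have hcompl : ((Finset.image u Finset.univ)ᶜ : Finset (Fin (M + 1))).Nonempty := by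
        rw [← Finset.card_pos, Finset.card_compl,
          Finset.card_image_of_injective _ hu.injective, Finset.card_univ,
          Fintype.card_fin, Fintype.card_fin]
        omega
      obtain ⟨m, hm⟩ := hcompl
      rw [Finset.mem_compl] at hm
      have hm' : ∀ j, u j ≠ m := by
        intro j hj
        exact hm (hj ▸ Finset.mem_image_of_mem u (Finset.mem_univ j))
      obtain ⟨t, htmono, htc⟩ := aux_exists_pre m u hu hm'
      exact Finset.mem_image.mpr ⟨(m, t), Finset.mem_product.mpr
        ⟨Finset.mem_univ _, Finset.mem_filter.mpr ⟨Finset.mem_univ _, htmono⟩⟩, htc⟩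
  have hfib : ∀ u ∈ B,
      (((Finset.univ : Finset (Fin (M + 1))) ×ˢ A).filter (fun p => g p = u)).card
        = M - N := by
    intro u hu
    rw [hB, Finset.mem_filter] at hu
    have hcard : ((Finset.image u Finset.univ)ᶜ : Finset (Fin (M + 1))).card = M - N := by
      rw [Finset.card_compl, Finset.card_image_of_injective _ hu.2.injective,
        Finset.card_univ, Fintype.card_fin, Fintype.card_fin]
      omega
    rw [← hcard]
    refine Finset.card_bij (fun p _ => p.1) ?_ ?_ ?_
    · rintro ⟨m, t⟩ hp
      rw [Finset.mem_filter] at hp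
      rw [Finset.mem_compl]
      intro hmem
      rw [Finset.mem_image] at hmem
      obtain ⟨j, -, hj⟩ := hmem
      have hj' : u j = m := hj
      have hcf : m.succAbove (t j) = u j := congrFun hp.2 j
      exact Fin.succAbove_ne m (t j) (hcf.trans hj')
    · rintro ⟨m, t⟩ hp ⟨m', t'⟩ hp' hmm'
      have h : m = m' := hmm'
      subst h
      rw [Finset.mem_filter] at hp hp'
      have : t = t' := by
        funext j
        apply Fin.succAbove_right_injective (p := m)
        have h1 : m.succAbove (t j) = u j := congrFun hp.2 j
        have h2 : m.succAbove (t' j) = u j := congrFun hp'.2 j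
        rw [h1, h2]
      rw [this]
    · intro m hm
      rw [Finset.mem_compl] at hm
      have hm' : ∀ j, u j ≠ m := by
        intro j hj
        exact hm (hj ▸ Finset.mem_image_of_mem u (Finset.mem_univ j))
      obtain ⟨t, htmono, htc⟩ := aux_exists_pre m u hu.2 hm'
      refine ⟨(m, t), ?_, rfl⟩
      rw [Finset.mem_filter]
      exact ⟨Finset.mem_product.mpr ⟨Finset.mem_univ _,
        Finset.mem_filter.mpr ⟨Finset.mem_univ _, htmono⟩⟩, htc⟩
  rw [h1, Finset.prod_comp f g, himg]
  exact Finset.prod_congr rfl fun u hu => by rw [hfib u hu]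

open scoped Classical in
/-- Hadamard-type bound for the determinant over an ultrametric field. -/
lemma aux_norm_det_le {K : Type*} [NormedField K] [IsUltrametricDist K] {n : ℕ}
    (A : Matrix (Fin n) (Fin n) K) {C : ℝ} (hC : 0 ≤ C) (h : ∀ i j, ‖A i j‖ ≤ C) :
    ‖A.det‖ ≤ C ^ n := by
  rw [Matrix.det_apply]
  refine IsUltrametricDist.norm_sum_le_of_forall_le_of_nonneg (by positivity) ?_
  intro σ _
  have hnorm : ‖Equiv.Perm.sign σ • ∏ i, A (σ i) i‖ = ‖∏ i, A (σ i) i‖ := by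
    rcases Int.units_eq_one_or (Equiv.Perm.sign σ) with hs | hs <;>
      simp [hs, Units.smul_def]
  rw [hnorm, norm_prod]
  calc ∏ i, ‖A (σ i) i‖ ≤ ∏ _i : Fin n, C :=
        Finset.prod_le_prod (fun i _ => norm_nonneg _) (fun i _ => h _ _)
    _ = C ^ n := by simp

/-- For an infinite bounded subset `E` of `K^{N+1}` over a non-archimedean field `K`, the
sequence `M ↦ d_M(E)` is monotone decreasing (for `M ≥ N+1`), and hence the homogeneous
transfinite diameter `d_∞(E) = lim_{M→∞} d_M(E)` exists. -/
theorem stmt_14 {K : Type*} [NormedField K] [IsUltrametricDist K] {N : ℕ}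
    (E : Set (Fin (N + 1) → K)) (hE : E.Infinite)
    (hbdd : ∃ B : ℝ, ∀ x ∈ E, ‖x‖ ≤ B) :
    (∀ M, N + 1 ≤ M → mDiameter E (M + 1) ≤ mDiameter E M) ∧
    ∃ L : ℝ, Filter.Tendsto (fun M => mDiameter E M) Filter.atTop (nhds L) := by
  classical
  obtain ⟨B, hB⟩ := hbdd
  set C0 : ℝ := max B 1 with hC0def
  have hC0 : 1 ≤ C0 := le_max_right _ _
  have hC0' : 0 ≤ C0 := zero_le_one.trans hC0
  -- the defining set of mDiameter
  set Sset : ℕ → Set ℝ := fun M => {r : ℝ | ∃ s : Fin M → (Fin (N + 1) → K),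
    Function.Injective s ∧ (∀ i, s i ∈ E) ∧
      r = absVandermonde s ^ ((M.choose (N + 1) : ℝ)⁻¹)} with hSset
  have hmD : ∀ M, mDiameter E M = sSup (Sset M) := fun M => rfl
  -- basic bound on absVandermonde
  have habsV_nonneg : ∀ {M : ℕ} (s : Fin M → (Fin (N + 1) → K)), 0 ≤ absVandermonde s := by
    intro M s
    exact Finset.prod_nonneg fun t _ => norm_nonneg _
  have habsV_le : ∀ {M : ℕ} (s : Fin M → (Fin (N + 1) → K)), (∀ i, s i ∈ E) →
      absVandermonde s ≤ (C0 ^ (N + 1)) ^ (M.choose (N + 1)) := by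
    intro M s hs
    rw [absVandermonde, ← aux_card_strictMono (N + 1) M, ← Finset.prod_const]
    refine Finset.prod_le_prod (fun t _ => norm_nonneg _) (fun t _ => ?_)
    refine aux_norm_det_le _ hC0' (fun i j => ?_)
    calc ‖(Matrix.of fun i j => s (t j) i) i j‖ = ‖s (t j) i‖ := rfl
      _ ≤ ‖s (t j)‖ := norm_le_pi_norm _ i
      _ ≤ B := hB _ (hs _)
      _ ≤ C0 := le_max_left _ _
  -- uniform upper bound for elements of Sset M
  have hub : ∀ M, ∀ r ∈ Sset M, r ≤ C0 ^ (N + 1) := by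
    intro M r hr
    obtain ⟨s, hsinj, hsE, rfl⟩ := hr
    by_cases hM : N + 1 ≤ M
    · have hCne : M.choose (N + 1) ≠ 0 := (Nat.choose_pos hM).ne'
      calc absVandermonde s ^ ((M.choose (N + 1) : ℝ)⁻¹)
          ≤ ((C0 ^ (N + 1)) ^ (M.choose (N + 1))) ^ ((M.choose (N + 1) : ℝ)⁻¹) :=
            Real.rpow_le_rpow (habsV_nonneg s) (habsV_le s hsE) (by positivity)
        _ = C0 ^ (N + 1) := Real.pow_rpow_inv_natCast (by positivity) hCne
    · have hempty : (Finset.univ.filter (fun t : Fin (N + 1) → Fin M => StrictMono t))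
          = ∅ := by
        rw [Finset.filter_eq_empty_iff]
        intro t _
        intro hmono
        have := Fintype.card_le_of_injective t hmono.injective
        simp only [Fintype.card_fin] at this
        omega
      have h1 : absVandermonde s = 1 := by
        rw [absVandermonde, hempty, Finset.prod_empty]
      rw [h1, Real.one_rpow]
      exact one_le_pow₀ hC0
  have hbddA : ∀ M, BddAbove (Sset M) := fun M => ⟨C0 ^ (N + 1), fun r hr => hub M r hr⟩
  -- nonemptiness
  have hne : ∀ M, (Sset M).Nonempty := by
    intro M
    have : Infinite ↥E := hE.to_subtype
    set e : Fin M ↪ ↥E := (Fin.valEmbedding).trans (Infinite.natEmbedding ↥E) with he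
    refine ⟨absVandermonde (fun i => (e i : Fin (N + 1) → K)) ^ ((M.choose (N + 1) : ℝ)⁻¹),
      fun i => (e i : Fin (N + 1) → K), ?_, fun i => (e i).2, rfl⟩
    intro i j hij
    exact e.injective (Subtype.ext hij)
  -- nonnegativity of mDiameter
  have hd0 : ∀ M, 0 ≤ mDiameter E M := by
    intro M
    obtain ⟨r, hr⟩ := hne M
    have hr0 : 0 ≤ r := by
      obtain ⟨s, -, -, rfl⟩ := hr
      exact Real.rpow_nonneg (habsV_nonneg s) _
    exact hr0.trans (le_csSup (hbddA M) hr)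
  -- monotonicity
  have hmono : ∀ M, N + 1 ≤ M → mDiameter E (M + 1) ≤ mDiameter E M := by
    intro M hM
    rw [hmD, hmD]
    refine Real.sSup_le (fun r hr => ?_) (hd0 M)
    obtain ⟨s, hsinj, hsE, rfl⟩ := hr
    set C : ℕ := M.choose (N + 1) with hC
    set C' : ℕ := (M + 1).choose (N + 1) with hC'
    have hCne : C ≠ 0 := (Nat.choose_pos hM).ne'
    have hC'ne : C' ≠ 0 := (Nat.choose_pos (by omega)).ne'
    set D : ℝ := mDiameter E M with hD
    have hD0 : 0 ≤ D := hd0 M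
    -- step 1
    have h1 : ∀ m : Fin (M + 1), absVandermonde (s ∘ m.succAbove) ≤ D ^ C := by
      intro m
      have hmem : absVandermonde (s ∘ m.succAbove) ^ ((C : ℝ)⁻¹) ∈ Sset M :=
        ⟨s ∘ m.succAbove, hsinj.comp (Fin.succAbove_right_injective),
          fun i => hsE _, rfl⟩
      have hle : absVandermonde (s ∘ m.succAbove) ^ ((C : ℝ)⁻¹) ≤ D :=
        le_csSup (hbddA M) hmem
      calc absVandermonde (s ∘ m.succAbove)
          = (absVandermonde (s ∘ m.succAbove) ^ ((C : ℝ)⁻¹)) ^ C :=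
            (Real.rpow_inv_natCast_pow (habsV_nonneg _) hCne).symm
        _ ≤ D ^ C := pow_le_pow_left₀ (Real.rpow_nonneg (habsV_nonneg _) _) hle C
    -- step 2 : product identity
    have h2 : ∏ m : Fin (M + 1), absVandermonde (s ∘ m.succAbove)
        = absVandermonde s ^ (M - N) := by
      have := aux_key_prod hM
        (fun u : Fin (N + 1) → Fin (M + 1) => ‖(Matrix.of fun i j => s (u j) i).det‖)
      calc ∏ m : Fin (M + 1), absVandermonde (s ∘ m.succAbove)
          = ∏ m : Fin (M + 1), ∏ t ∈ Finset.univ.filter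
              (fun t : Fin (N + 1) → Fin M => StrictMono t),
              ‖(Matrix.of fun i j => s ((m.succAbove ∘ t) j) i).det‖ := rfl
        _ = ∏ u ∈ Finset.univ.filter
              (fun u : Fin (N + 1) → Fin (M + 1) => StrictMono u),
              ‖(Matrix.of fun i j => s (u j) i).det‖ ^ (M - N) := this
        _ = absVandermonde s ^ (M - N) := by
            rw [absVandermonde, Finset.prod_pow]
    -- step 3
    have h3 : absVandermonde s ^ (M - N) ≤ (D ^ C') ^ (M - N) := by
      rw [← h2]
      calc ∏ m : Fin (M + 1), absVandermonde (s ∘ m.succAbove)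
          ≤ ∏ _m : Fin (M + 1), D ^ C :=
            Finset.prod_le_prod (fun m _ => habsV_nonneg _) (fun m _ => h1 m)
        _ = D ^ (C * (M + 1)) := by rw [Finset.prod_const, Finset.card_univ,
            Fintype.card_fin, ← pow_mul]
        _ = (D ^ C') ^ (M - N) := by
            rw [← pow_mul]
            congr 1
            have hsub : M + 1 - (N + 1) = M - N := by omega
            rw [hC, hC', ← hsub]
            exact Nat.choose_mul_succ_eq M (N + 1)
    -- step 4
    have h4 : absVandermonde s ≤ D ^ C' := by
      have hMN : M - N ≠ 0 := by omega
      exact (pow_le_pow_iff_left₀ (habsV_nonneg s) (by positivity) hMN).mp h3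
    -- step 5
    calc absVandermonde s ^ (((M + 1).choose (N + 1) : ℝ)⁻¹)
        ≤ (D ^ C') ^ ((C' : ℝ)⁻¹) :=
          Real.rpow_le_rpow (habsV_nonneg s) h4 (by positivity)
      _ = D := Real.pow_rpow_inv_natCast hD0 hC'ne
  refine ⟨hmono, ?_⟩
  -- existence of the limit
  set h : ℕ → ℝ := fun n => mDiameter E (n + (N + 1)) with hh
  have hanti : Antitone h := by
    refine antitone_nat_of_succ_le (fun n => ?_)
    have := hmono (n + (N + 1)) (by omega)
    simpa [hh, show n + 1 + (N + 1) = n + (N + 1) + 1 by omega] using this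
  have hbel : BddBelow (Set.range h) := ⟨0, fun x ⟨n, hn⟩ => hn ▸ hd0 _⟩
  refine ⟨⨅ n, h n, ?_⟩
  have := tendsto_atTop_ciInf hanti hbel
  exact (Filter.tendsto_add_atTop_iff_nat (N + 1)).mp this
end

section
/- Let K be a field with a non-archimedean absolute value, E an infinite bounded subset of K^{N+1}, and Γ ∈ GL_{N+1}(K). Then the homogeneous transfinite diameter satisfies d_∞(Γ(E)) = |det(Γ)| · d_∞(E). -/
open scoped Classical in
lemma card_strictMono_filter (N M : ℕ) :
    (Finset.univ.filter (fun t : Fin (N + 1) → Fin M => StrictMono t)).card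
      = M.choose (N + 1) := by
  have hrhs : M.choose (N + 1) = ((Finset.univ : Finset (Fin M)).powersetCard (N + 1)).card := by
    simp [Finset.card_powersetCard]
  rw [hrhs]
  apply Finset.card_bij (fun t _ => Finset.image t Finset.univ)
  · intro t ht
    simp only [Finset.mem_filter] at ht
    simp only [Finset.mem_powersetCard]
    refine ⟨Finset.subset_univ _, ?_⟩
    rw [Finset.card_image_of_injective _ ht.2.injective, Finset.card_univ, Fintype.card_fin]
  · intro t1 h1 t2 h2 h
    simp only [Finset.mem_filter] at h1 h2
    have hc : (Finset.image t1 Finset.univ).card = N + 1 := by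
      rw [Finset.card_image_of_injective _ h1.2.injective, Finset.card_univ, Fintype.card_fin]
    have e1 := Finset.orderEmbOfFin_unique hc (fun x => Finset.mem_image_of_mem _ (Finset.mem_univ x)) h1.2
    have e2 := Finset.orderEmbOfFin_unique hc (fun x => h ▸ Finset.mem_image_of_mem _ (Finset.mem_univ x)) h2.2
    funext x
    rw [congrFun e1 x, congrFun e2 x]
  · intro s hs
    simp only [Finset.mem_powersetCard] at hs
    refine ⟨s.orderEmbOfFin hs.2, ?_, ?_⟩
    · simp only [Finset.mem_filter]
      exact ⟨Finset.mem_univ _, (s.orderEmbOfFin hs.2).strictMono⟩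
    · ext x
      simp only [Finset.mem_image, Finset.mem_univ, true_and]
      constructor
      · rintro ⟨i, rfl⟩; exact Finset.orderEmbOfFin_mem _ _ _
      · intro hx
        have := Finset.range_orderEmbOfFin s hs.2
        have : x ∈ Set.range (s.orderEmbOfFin hs.2) := this ▸ hx
        obtain ⟨i, hi⟩ := this
        exact ⟨i, hi⟩

lemma absVandermonde_map {K : Type*} [NormedField K] {N M : ℕ}
    (Γ : (Fin (N + 1) → K) ≃ₗ[K] (Fin (N + 1) → K)) (s : Fin M → (Fin (N + 1) → K)) :
    absVandermonde (fun i => Γ (s i))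
      = ‖LinearMap.det Γ.toLinearMap‖ ^ (M.choose (N + 1)) * absVandermonde s := by
  classical
  unfold absVandermonde
  have hmv : ∀ x : Fin (N + 1) → K,
      Matrix.mulVec (LinearMap.toMatrix' Γ.toLinearMap) x = Γ x := by
    intro x
    rw [← Matrix.toLin'_apply, Matrix.toLin'_toMatrix']
    rfl
  have key : ∀ t : Fin (N + 1) → Fin M,
      (Matrix.of fun i j => Γ (s (t j)) i)
        = (LinearMap.toMatrix' Γ.toLinearMap) * (Matrix.of fun i j => s (t j) i) := by
    intro t
    ext i j
    rw [Matrix.mul_apply]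
    have := congrFun (hmv (s (t j))) i
    simp only [Matrix.mulVec, dotProduct] at this
    simpa using this.symm
  have : ∀ t ∈ Finset.univ.filter (fun t : Fin (N + 1) → Fin M => StrictMono t),
      ‖(Matrix.of fun i j => Γ (s (t j)) i).det‖
        = ‖LinearMap.det Γ.toLinearMap‖ * ‖(Matrix.of fun i j => s (t j) i).det‖ := by
    intro t _
    rw [key t, Matrix.det_mul, norm_mul, LinearMap.det_toMatrix']
  rw [Finset.prod_congr rfl this, Finset.prod_mul_distrib, Finset.prod_const,
    card_strictMono_filter]
lemma absVandermonde_nonneg {K : Type*} [NormedField K] {N M : ℕ}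
    (s : Fin M → (Fin (N + 1) → K)) : 0 ≤ absVandermonde s := by
  unfold absVandermonde
  exact Finset.prod_nonneg fun _ _ => norm_nonneg _

open Pointwise in
lemma mDiameter_map {K : Type*} [NormedField K] {N : ℕ}
    (E : Set (Fin (N + 1) → K))
    (Γ : (Fin (N + 1) → K) ≃ₗ[K] (Fin (N + 1) → K)) {M : ℕ} (hM : N + 1 ≤ M) :
    mDiameter ((fun x => Γ x) '' E) M = ‖LinearMap.det Γ.toLinearMap‖ * mDiameter E M := by
  set c : ℝ := ‖LinearMap.det Γ.toLinearMap‖ with hc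
  have hc0 : 0 ≤ c := norm_nonneg _
  have hn : M.choose (N + 1) ≠ 0 := (Nat.choose_pos hM).ne'
  have hexp : (M.choose (N + 1) : ℝ) * (M.choose (N + 1) : ℝ)⁻¹ = 1 :=
    mul_inv_cancel₀ (by exact_mod_cast hn)
  have hpow : ∀ A : ℝ, 0 ≤ A →
      (c ^ M.choose (N + 1) * A) ^ ((M.choose (N + 1) : ℝ)⁻¹)
        = c * A ^ ((M.choose (N + 1) : ℝ)⁻¹) := by
    intro A hA
    rw [Real.mul_rpow (pow_nonneg hc0 _) hA, ← Real.rpow_natCast c (M.choose (N + 1)),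
      ← Real.rpow_mul hc0, hexp, Real.rpow_one]
  have hset : {r : ℝ | ∃ s : Fin M → (Fin (N + 1) → K),
      Function.Injective s ∧ (∀ i, s i ∈ (fun x => Γ x) '' E) ∧
        r = absVandermonde s ^ ((M.choose (N + 1) : ℝ)⁻¹)}
      = c • {r : ℝ | ∃ s : Fin M → (Fin (N + 1) → K),
      Function.Injective s ∧ (∀ i, s i ∈ E) ∧
        r = absVandermonde s ^ ((M.choose (N + 1) : ℝ)⁻¹)} := by
    ext r
    constructor
    · rintro ⟨s', hinj, hmem, rfl⟩
      refine Set.mem_smul_set.mpr ⟨absVandermonde (fun i => Γ.symm (s' i))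
        ^ ((M.choose (N + 1) : ℝ)⁻¹), ⟨fun i => Γ.symm (s' i),
        fun a b hab => hinj (Γ.symm.injective hab), fun i => ?_, rfl⟩, ?_⟩
      · obtain ⟨x, hx, hxe⟩ := hmem i
        show Γ.symm (s' i) ∈ E
        rw [← hxe]
        simpa using hx
      · have hs' : s' = fun i => Γ (Γ.symm (s' i)) := by
          funext i; rw [Γ.apply_symm_apply]
        have := absVandermonde_map Γ (fun i => Γ.symm (s' i))
        rw [smul_eq_mul, ← hpow _ (absVandermonde_nonneg _), ← this, ← hs']
    · intro hr
      obtain ⟨y, ⟨s, hinj, hmem, rfl⟩, rfl⟩ := Set.mem_smul_set.mp hr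
      refine ⟨fun i => Γ (s i), fun a b hab => hinj (Γ.injective hab),
        fun i => ⟨s i, hmem i, rfl⟩, ?_⟩
      rw [absVandermonde_map Γ s, hpow _ (absVandermonde_nonneg s), smul_eq_mul]
  rw [mDiameter, mDiameter, hset, Real.sSup_smul_of_nonneg hc0, smul_eq_mul]

/-- For an infinite bounded subset `E` of `K^{N+1}` over a non-archimedean field `K` and
`Γ ∈ GL_{N+1}(K)`, the homogeneous transfinite diameter satisfies
`d_∞(Γ(E)) = |det Γ| · d_∞(E)`: if `d_M(E) → L`, then `d_M(Γ(E)) → ‖det Γ‖ * L`. -/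
theorem stmt_15 {K : Type*} [NormedField K] [IsUltrametricDist K] {N : ℕ}
    (E : Set (Fin (N + 1) → K)) (hE : E.Infinite)
    (hbdd : ∃ B : ℝ, ∀ x ∈ E, ‖x‖ ≤ B)
    (Γ : (Fin (N + 1) → K) ≃ₗ[K] (Fin (N + 1) → K))
    (L : ℝ)
    (hL : Filter.Tendsto (fun M => mDiameter E M) Filter.atTop (nhds L)) :
    Filter.Tendsto (fun M => mDiameter ((fun x => Γ x) '' E) M) Filter.atTop
      (nhds (‖LinearMap.det Γ.toLinearMap‖ * L)) := by
  have h1 : Filter.Tendsto (fun M => ‖LinearMap.det Γ.toLinearMap‖ * mDiameter E M)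
      Filter.atTop (nhds (‖LinearMap.det Γ.toLinearMap‖ * L)) := hL.const_mul _
  refine h1.congr' ?_
  filter_upwards [Filter.eventually_ge_atTop (N + 1)] with M hM
  exact (mDiameter_map E Γ hM).symm
end

section
/- Let K be an algebraically closed field with a nontrivial non-archimedean absolute value, and let E = Γ(B(0,1)) be an ellipsoid in K^{N+1} with B(0,1) ⊆ E and homogeneous transfinite diameter d_∞(E) = 1. Then E = B(0,1). -/
open IsUltrametricDist

lemma myDetBound {K : Type*} [NormedField K] [IsUltrametricDist K] {n : ℕ}
    (Q : Matrix (Fin n) (Fin n) K) (h : ∀ i j, ‖Q i j‖ ≤ 1) : ‖Q.det‖ ≤ 1 := by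
  rw [Matrix.det_apply']
  refine norm_sum_le_of_forall_le_of_nonneg zero_le_one fun σ _ => ?_
  rw [norm_mul, norm_prod]
  have h1 : ‖((Equiv.Perm.sign σ : ℤ) : K)‖ = 1 := by
    rcases Int.units_eq_one_or (Equiv.Perm.sign σ) with h' | h' <;> simp [h']
  rw [h1, one_mul]
  exact Finset.prod_le_one (fun i _ => norm_nonneg _) (fun i _ => h _ _)

lemma myFamily (K : Type*) [NontriviallyNormedField K] [IsUltrametricDist K] [IsAlgClosed K]
    (M : ℕ) :
    ∃ a : Fin M → K, (∀ i, ‖a i‖ ≤ 1) ∧ ∀ i j, i ≠ j → ‖a i - a j‖ = 1 := by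
  induction M with
  | zero => exact ⟨finZeroElim, fun i => i.elim0, fun i => i.elim0⟩
  | succ M ih =>
    obtain ⟨a, ha1, ha2⟩ := ih
    rcases Nat.eq_zero_or_pos M with hM | hM
    · subst hM
      haveI : Subsingleton (Fin (0+1)) := Fin.subsingleton_one
      refine ⟨fun _ => 0, fun _ => by simp, fun i j hij => absurd (Subsingleton.elim i j) hij⟩
    · set P : Polynomial K := ((∏ i : Fin M, (Polynomial.X - Polynomial.C (a i)))
        - Polynomial.C 1) with hP
      have hdegprod : (∏ i : Fin M, (Polynomial.X - Polynomial.C (a i))).degree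
          = (M : WithBot ℕ) := by
        rw [Polynomial.degree_prod]
        simp [Polynomial.degree_X_sub_C]
      have hdeg : P.degree = (M : WithBot ℕ) := by
        rw [hP, Polynomial.degree_sub_eq_left_of_degree_lt]
        · exact hdegprod
        · rw [hdegprod]
          exact lt_of_le_of_lt (Polynomial.degree_C_le) (by exact_mod_cast hM)
      obtain ⟨x, hx⟩ := IsAlgClosed.exists_root P (by rw [hdeg]; exact_mod_cast hM.ne')
      have hprod : (∏ i : Fin M, (x - a i)) = 1 := by
        have := hx
        rw [Polynomial.IsRoot, hP] at this
        simpa [Polynomial.eval_prod, sub_eq_zero] using this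
      have hxle : ‖x‖ ≤ 1 := by
        by_contra hgt
        push_neg at hgt
        have hfac : ∀ i : Fin M, ‖x - a i‖ = ‖x‖ := by
          intro i
          have hne : ‖x‖ ≠ ‖-(a i)‖ := by
            rw [norm_neg]; exact ne_of_gt (lt_of_le_of_lt (ha1 i) hgt)
          have := norm_add_eq_max_of_norm_ne_norm hne
          rw [← sub_eq_add_neg] at this
          rw [this, norm_neg, max_eq_left (le_of_lt (lt_of_le_of_lt (ha1 i) hgt))]
        have : ‖(∏ i : Fin M, (x - a i))‖ = ‖x‖ ^ M := by
          rw [norm_prod]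
          simp [hfac, Finset.prod_const]
        rw [hprod, norm_one] at this
        have := this.symm
        have hgt2 : (1:ℝ) < ‖x‖ ^ M := one_lt_pow₀ hgt hM.ne'
        rw [← this] at hgt2
        exact lt_irrefl _ hgt2
      have hfacle : ∀ i : Fin M, ‖x - a i‖ ≤ 1 := by
        intro i
        calc ‖x - a i‖ = ‖x + (-(a i))‖ := by rw [sub_eq_add_neg]
        _ ≤ max ‖x‖ ‖-(a i)‖ := norm_add_le_max _ _
        _ ≤ 1 := max_le hxle (by rw [norm_neg]; exact ha1 i)
      have hfaceq : ∀ i : Fin M, ‖x - a i‖ = 1 := by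
        intro i
        refine le_antisymm (hfacle i) ?_
        have h1 : (1:ℝ) = ‖x - a i‖ * ∏ j ∈ Finset.univ.erase i, ‖x - a j‖ := by
          rw [Finset.mul_prod_erase Finset.univ (fun j => ‖x - a j‖) (Finset.mem_univ i),
            ← norm_prod, hprod, norm_one]
        have h2 : (∏ j ∈ Finset.univ.erase i, ‖x - a j‖) ≤ 1 :=
          Finset.prod_le_one (fun j _ => norm_nonneg _) (fun j _ => hfacle j)
        calc (1:ℝ) = ‖x - a i‖ * ∏ j ∈ Finset.univ.erase i, ‖x - a j‖ := h1
        _ ≤ ‖x - a i‖ * 1 := mul_le_mul_of_nonneg_left h2 (norm_nonneg _)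
        _ = ‖x - a i‖ := mul_one _
      refine ⟨Fin.cons x a, ?_, ?_⟩
      · intro i
        refine Fin.cases ?_ ?_ i
        · simpa using hxle
        · intro j; simpa using ha1 j
      · intro i j hij
        rcases Fin.eq_zero_or_eq_succ i with rfl | ⟨i', rfl⟩ <;>
          rcases Fin.eq_zero_or_eq_succ j with rfl | ⟨j', rfl⟩
        · exact absurd rfl hij
        · simpa using hfaceq j'
        · simpa [norm_sub_rev] using hfaceq i'
        · have h' : i' ≠ j' := fun h => hij (by rw [h])
          simpa using ha2 i' j' h'

open scoped Classical in
lemma myCardStrictMono (k M : ℕ) :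
    (Finset.univ.filter (fun t : Fin k → Fin M => StrictMono t)).card = M.choose k := by
  rw [← Fintype.card_subtype]
  have e : {t : Fin k → Fin M // StrictMono t} ≃ {s : Finset (Fin M) // s.card = k} :=
    { toFun := fun t => ⟨Finset.image t.1 Finset.univ, by
        rw [Finset.card_image_of_injective _ t.2.injective, Finset.card_univ,
          Fintype.card_fin]⟩
      invFun := fun s => ⟨s.1.orderEmbOfFin s.2, (s.1.orderEmbOfFin s.2).strictMono⟩
      left_inv := fun t => by
        apply Subtype.ext
        funext x
        exact (congrFun (Finset.orderEmbOfFin_unique _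
          (fun y => Finset.mem_image_of_mem _ (Finset.mem_univ y)) t.2) x).symm
      right_inv := fun s => by
        ext1
        refine Finset.coe_injective ?_
        rw [Finset.coe_image, Finset.coe_univ, Set.image_univ]
        exact Finset.range_orderEmbOfFin s.1 s.2 }
  rw [Fintype.card_congr e, Fintype.card_finset_len, Fintype.card_fin]



/-- Let `K` be an algebraically closed field with a nontrivial non-archimedean absolute value,
and let `E = Γ(B(0,1))` be an ellipsoid in `K^{N+1}` (`Γ ∈ GL_{N+1}(K)`) with `B(0,1) ⊆ E` and
homogeneous transfinite diameter `d_∞(E) = 1` (the sequence `d_M(E)` converges to `1`).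
Then `E = B(0,1)`. -/
theorem stmt_19 {K : Type*} [NontriviallyNormedField K] [IsUltrametricDist K] [IsAlgClosed K]
    {N : ℕ} (Γ : (Fin (N + 1) → K) ≃ₗ[K] (Fin (N + 1) → K))
    (E : Set (Fin (N + 1) → K))
    (hE : E = (fun x => Γ x) '' {x : Fin (N + 1) → K | ‖x‖ ≤ 1})
    (hsub : {x : Fin (N + 1) → K | ‖x‖ ≤ 1} ⊆ E)
    (hdiam : Filter.Tendsto (fun M => mDiameter E M) Filter.atTop (nhds 1)) :
    E = {x : Fin (N + 1) → K | ‖x‖ ≤ 1} := by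
  set P := LinearMap.toMatrix' (Γ : (Fin (N+1) → K) →ₗ[K] (Fin (N+1) → K)) with hPdef
  set Q := LinearMap.toMatrix' (Γ.symm : (Fin (N+1) → K) →ₗ[K] (Fin (N+1) → K)) with hQdef
  have hPapp : ∀ x, Γ x = P.mulVec x := fun x => by
    rw [hPdef, ← Matrix.toLin'_apply, Matrix.toLin'_toMatrix']; rfl
  have hQapp : ∀ x, Γ.symm x = Q.mulVec x := fun x => by
    rw [hQdef, ← Matrix.toLin'_apply, Matrix.toLin'_toMatrix']; rfl
  have hPQ : P * Q = 1 := by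
    rw [hPdef, hQdef, ← LinearMap.toMatrix'_comp]
    have : (Γ : (Fin (N+1) → K) →ₗ[K] (Fin (N+1) → K)) ∘ₗ
        (Γ.symm : (Fin (N+1) → K) →ₗ[K] (Fin (N+1) → K)) = LinearMap.id := by
      ext x; simp
    rw [this, LinearMap.toMatrix'_id]
  -- entries of Q are bounded by 1
  have hQent : ∀ i j, ‖Q i j‖ ≤ 1 := by
    intro i j
    have hmem : Γ (Γ.symm (Pi.single j 1)) = Pi.single j 1 := Γ.apply_symm_apply _
    have hsing : ‖(Pi.single j 1 : Fin (N+1) → K)‖ ≤ 1 := by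
      refine (pi_norm_le_iff_of_nonneg zero_le_one).2 fun k => ?_
      rw [Pi.single_apply]
      split <;> simp
    obtain ⟨y, hy, hyx⟩ : Pi.single j 1 ∈ (fun x => Γ x) '' {x : Fin (N+1) → K | ‖x‖ ≤ 1} :=
      hE ▸ hsub hsing
    have hsymm : Γ.symm (Pi.single j 1) = y := by
      rw [← hyx]; exact Γ.symm_apply_apply y
    have hQij : Q i j = Γ.symm (Pi.single j 1) i := by
      rw [hQapp, Matrix.mulVec_single]
      simp
    rw [hQij, hsymm]
    exact (norm_le_pi_norm y i).trans hy
  have hdetQ : ‖Q.det‖ ≤ 1 := myDetBound Q hQent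
  -- ‖det P‖ ≤ 1 via the transfinite diameter
  have hA : ‖P.det‖ ≤ 1 := by
    set A := ‖P.det‖ with hAdef
    have hev : ∀ᶠ M in Filter.atTop, A ≤ mDiameter E M := by
      have h1 : ∀ᶠ M in Filter.atTop, (1:ℝ)/2 < mDiameter E M :=
        hdiam.eventually (lt_mem_nhds (by norm_num))
      filter_upwards [h1, Filter.eventually_ge_atTop (N+1)] with M hM1 hM2
      obtain ⟨a, ha1, ha2⟩ := myFamily K (M+1)
      set b : Fin M → K := fun i => a i.succ - a 0 with hbdef
      have hb1 : ∀ i, ‖b i‖ = 1 := fun i => ha2 _ _ (Fin.succ_ne_zero i)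
      have hbd : ∀ i j : Fin M, i ≠ j → ‖b i - b j‖ = 1 := by
        intro i j hij
        have hb : b i - b j = a i.succ - a j.succ := by rw [hbdef]; ring
        rw [hb]
        exact ha2 _ _ (fun h' => hij (Fin.succ_injective _ h'))
      have hbne : Function.Injective b := by
        intro i j h
        by_contra hij
        have := hbd i j hij
        rw [h, sub_self, norm_zero] at this
        norm_num at this
      set v : Fin M → (Fin (N+1) → K) := fun i => fun j => b i ^ ((j:ℕ)+1) with hvdef
      have hvB : ∀ i, ‖v i‖ ≤ 1 := by
        intro i
        refine (pi_norm_le_iff_of_nonneg zero_le_one).2 fun k => ?_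
        rw [hvdef]
        simp only [norm_pow, hb1 i, one_pow]
        exact le_refl 1
      set s : Fin M → (Fin (N+1) → K) := fun i => Γ (v i) with hsdef
      have hsinj : Function.Injective s := by
        intro i j h
        have hv : v i = v j := Γ.injective h
        have h0 := congrFun hv 0
        rw [hvdef] at h0
        simp only [Fin.val_zero, zero_add, pow_one] at h0
        exact hbne h0
      have hsE : ∀ i, s i ∈ E := fun i => hE ▸ ⟨v i, hvB i, rfl⟩
      -- compute absVandermonde s
      have hdet1 : ∀ t : Fin (N+1) → Fin M, StrictMono t →
          ‖(Matrix.of fun i j => s (t j) i).det‖ = A := by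
        intro t htm
        have hmat1 : (Matrix.of fun i j => s (t j) i)
            = P * Matrix.of (fun i j => v (t j) i) := by
          ext i j
          rw [hsdef]
          simp [hPapp, Matrix.mul_apply, Matrix.mulVec, dotProduct]
        have hmat2 : Matrix.of (fun i j => v (t j) i)
            = Matrix.transpose (Matrix.vandermonde (fun j => b (t j)))
              * Matrix.diagonal (fun j => b (t j)) := by
          ext i j
          rw [Matrix.mul_diagonal]
          simp [Matrix.vandermonde, hvdef, pow_succ]
        rw [hmat1, hmat2, Matrix.det_mul, Matrix.det_mul, Matrix.det_transpose,
          Matrix.det_vandermonde, Matrix.det_diagonal]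
        rw [norm_mul, norm_mul, norm_prod, norm_prod]
        have hp1 : (∏ i : Fin (N+1), ‖∏ j ∈ Finset.Ioi i, (b (t j) - b (t i))‖) = 1 := by
          refine Finset.prod_eq_one fun i _ => ?_
          rw [norm_prod]
          refine Finset.prod_eq_one fun j hj => ?_
          exact hbd _ _ (fun h' => absurd (htm.injective h')
            (ne_of_gt (Finset.mem_Ioi.mp hj)))
        have hp2 : (∏ i : Fin (N+1), ‖b (t i)‖) = 1 :=
          Finset.prod_eq_one fun i _ => hb1 _
        rw [hp1, hp2, mul_one, mul_one]
      have hchoose : (M.choose (N+1) : ℝ) ≠ 0 := by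
        exact_mod_cast (Nat.choose_pos hM2).ne'
      have hAV : absVandermonde s = A ^ (M.choose (N+1)) := by
        unfold absVandermonde
        classical
        rw [Finset.prod_congr rfl (fun t ht => hdet1 t (Finset.mem_filter.mp ht).2),
          Finset.prod_const, myCardStrictMono]
      have hmemset : A ∈ {r : ℝ | ∃ s : Fin M → (Fin (N + 1) → K),
          Function.Injective s ∧ (∀ i, s i ∈ E) ∧
            r = absVandermonde s ^ ((M.choose (N + 1) : ℝ)⁻¹)} := by
        refine ⟨s, hsinj, hsE, ?_⟩
        rw [hAV, ← Real.rpow_natCast A, ← Real.rpow_mul (norm_nonneg _),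
          mul_inv_cancel₀ hchoose, Real.rpow_one]
      by_cases hbdd : BddAbove {r : ℝ | ∃ s : Fin M → (Fin (N + 1) → K),
          Function.Injective s ∧ (∀ i, s i ∈ E) ∧
            r = absVandermonde s ^ ((M.choose (N + 1) : ℝ)⁻¹)}
      · exact le_csSup hbdd hmemset
      · exfalso
        have : mDiameter E M = 0 := by
          unfold mDiameter
          exact Real.sSup_of_not_bddAbove hbdd
        rw [this] at hM1
        norm_num at hM1
    exact ge_of_tendsto hdiam hev
  -- ‖det Q‖ = 1
  have hdetPQ : ‖P.det‖ * ‖Q.det‖ = 1 := by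
    rw [← norm_mul, ← Matrix.det_mul, hPQ, Matrix.det_one, norm_one]
  have hQ1 : ‖Q.det‖ = 1 := by
    refine le_antisymm hdetQ ?_
    calc (1:ℝ) = ‖P.det‖ * ‖Q.det‖ := hdetPQ.symm
    _ ≤ 1 * ‖Q.det‖ := mul_le_mul_of_nonneg_right hA (norm_nonneg _)
    _ = ‖Q.det‖ := one_mul _
  -- entries of P bounded by 1
  have hPinv : P = (Q.det)⁻¹ • Q.adjugate := by
    have h1 : Q⁻¹ = P := Matrix.inv_eq_left_inv hPQ
    rw [← h1, Matrix.inv_def, Ring.inverse_eq_inv']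
  have hadj : ∀ i j, ‖Q.adjugate i j‖ ≤ 1 := by
    intro i j
    rw [Matrix.adjugate_apply]
    refine myDetBound _ fun k l => ?_
    rw [Matrix.updateRow_apply]
    split
    · rw [Pi.single_apply]; split <;> simp
    · exact hQent k l
  have hPent : ∀ i j, ‖P i j‖ ≤ 1 := by
    intro i j
    rw [hPinv, Matrix.smul_apply, smul_eq_mul, norm_mul, norm_inv, hQ1]
    simpa using hadj i j
  -- conclude
  refine Set.Subset.antisymm ?_ hsub
  rw [hE]
  rintro x ⟨y, hy, rfl⟩
  have hy' : ‖y‖ ≤ 1 := hy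
  show ‖Γ y‖ ≤ 1
  rw [hPapp]
  refine (pi_norm_le_iff_of_nonneg zero_le_one).2 fun i => ?_
  show ‖∑ k, P i k * y k‖ ≤ 1
  refine norm_sum_le_of_forall_le_of_nonneg zero_le_one fun k _ => ?_
  rw [norm_mul]
  exact mul_le_one₀ (hPent i k) (norm_nonneg _) ((norm_le_pi_norm y k).trans hy')
end
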